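/- For every integer p ≥ 1 and every even integer k with 0 ≤ k ≤ 2p, one has ∑_{j=−p}^{p} δ^k_{p,j} · j^{2p+1} = 0. -/
import Mathlib


/-- Lagrange basis polynomial `F_{p,j}` on nodes `-p, …, p`. -/
noncomputable def Fpoly (p : ℕ) (j : ℤ) (x : ℝ) : ℝ :=
  ∏ r ∈ (Finset.Icc (-(p:ℤ)) (p:ℤ)).erase j, (x - (r:ℝ)) / ((j:ℝ) - (r:ℝ))

/-- `δ^k_{p,j} = F_{p,j}^{(k)}(0)`. -/
noncomputable def delta (p k : ℕ) (j : ℤ) : ℝ := iteratedDeriv k (Fpoly p j) 0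

lemma Fpoly_neg (p : ℕ) (j : ℤ) (x : ℝ) : Fpoly p (-j) x = Fpoly p j (-x) := by
  unfold Fpoly
  refine Finset.prod_bij' (fun r _ => -r) (fun r _ => -r) ?_ ?_ ?_ ?_ ?_
  · intro r hr
    simp only [Finset.mem_erase, Finset.mem_Icc] at hr ⊢
    constructor
    · intro h; exact hr.1 (by omega)
    · omega
  · intro r hr
    simp only [Finset.mem_erase, Finset.mem_Icc] at hr ⊢
    constructor
    · intro h; exact hr.1 (by omega)
    · omega
  · intro r _; ring
  · intro r _; ring
  · intro r _
    push_cast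
    rw [← neg_div_neg_eq]
    ring_nf

lemma delta_neg (p k : ℕ) (j : ℤ) (heven : Even k) :
    delta p k (-j) = delta p k j := by
  unfold delta
  have : Fpoly p (-j) = fun x => Fpoly p j (-x) := funext (Fpoly_neg p j)
  rw [this, iteratedDeriv_comp_neg, heven.neg_one_pow, neg_zero, one_smul]

/-- For even k: ∑_{j=-p}^{p} δ^k_{p,j} j^{2p+1} = 0. -/
theorem delta_moment_odd_power_of_even (p : ℕ) (hp : 1 ≤ p) (k : ℕ)
    (heven : Even k) (hk : k ≤ 2*p) :
    ∑ j ∈ Finset.Icc (-(p:ℤ)) (p:ℤ), delta p k j * (j:ℝ)^(2*p+1) = 0 := by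
  apply Finset.sum_involution (fun j _ => -j)
  · intro j hj
    rw [delta_neg p k j heven]
    push_cast
    rw [Odd.neg_pow ⟨p, by ring⟩]
    ring
  · intro j hj h hne
    apply h
    have : j = 0 := by omega
    simp [this]
  · intro j hj
    simp only [Finset.mem_Icc] at hj ⊢
    omega
  · intro j hj
    simp only [Finset.mem_Icc] at hj ⊢
    omega
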